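/- arXiv:1110.1696 — 2 statements merged into one kernel-verified Lean document; each statement's English description precedes it below -/
import Mathlib

section
/- Let c ∈ ℂ and η ∈ ℂ, η ≠ 0. Let V be a complex vector space equipped with operators 𝓛ₙ, aₙ (n ∈ ℤ) satisfying the W₂ relations: [𝓛ₙ, 𝓛ₘ] = (n−m)𝓛_{n+m} + (c/12)(n³−n)δ_{n+m,0}, [aₙ, aₘ] = 2ηn δ_{n+m,0}, and [𝓛ₙ, aₘ] = −m a_{n+m}, and assume the module is smooth: for every v ∈ V one has aₙ v = 0 for all sufficiently large n. Define Lₙ = 𝓛ₙ − (1/(4η)) Σ_{m∈ℤ} :a_{n−m} aₘ: (a finite sum on each vector). Then [Lₙ, Lₘ] = (n−m)L_{n+m} + ((c−1)/12)(n³−n)δ_{n+m,0}, [aₙ, aₘ] = 2ηn δ_{n+m,0}, and [Lₙ, aₘ] = 0; that is, V becomes a module over the direct sum of a Virasoro algebra with central charge ĉ = c − 1 and the Heisenberg algebra. -/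
noncomputable section

set_option linter.unusedSectionVars false
namespace Statement3Proof

open Function

variable {V : Type*} [AddCommGroup V] [Module ℂ V]

/-- normal ordered product `:a_{n-j} a_j:` -/
def NO (a : ℤ → Module.End ℂ V) (n j : ℤ) : Module.End ℂ V :=
  if n - j ≤ j then a (n - j) * a j else a j * a (n - j)

/-- correction scalar: `a_{n-j} a_j - :a_{n-j} a_j: = corr η n j • 1` -/
def corr (η : ℂ) (n j : ℤ) : ℂ :=
  if n = 0 ∧ j < 0 then 2 * η * ((n : ℂ) - (j : ℂ)) else 0

variable {η : ℂ} {a : ℤ → Module.End ℂ V}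

lemma NO_eq
    (haa : ∀ n m : ℤ, a n * a m - a m * a n =
      (if n + m = 0 then 2 * η * (n : ℂ) else 0) • (1 : Module.End ℂ V))
    (n j : ℤ) :
    NO a n j = a (n - j) * a j - corr η n j • 1 := by
  unfold NO corr
  by_cases h : n - j ≤ j
  · rw [if_pos h, if_neg, zero_smul, sub_zero]
    rintro ⟨rfl, hj⟩; omega
  · rw [if_neg h]
    have h2 := haa (n - j) j
    have : a j * a (n - j) = a (n - j) * a j -
        (if n - j + j = 0 then 2 * η * ((n - j : ℤ) : ℂ) else 0) • (1 : Module.End ℂ V) := by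
      rw [← h2]; abel
    rw [this]
    congr 1
    by_cases hn : n = 0
    · rw [if_pos (by omega), if_pos ⟨hn, by omega⟩]
      push_cast; ring
    · rw [if_neg (by omega), if_neg (by tauto)]

lemma NO_prod_eq
    (haa : ∀ n m : ℤ, a n * a m - a m * a n =
      (if n + m = 0 then 2 * η * (n : ℂ) else 0) • (1 : Module.End ℂ V))
    (n j : ℤ) :
    a (n - j) * a j = NO a n j + corr η n j • 1 := by
  rw [NO_eq haa, sub_add_cancel]

lemma NO_support_finite (hs : ∀ v : V, ∃ N : ℤ, ∀ n : ℤ, N ≤ n → a n v = 0) (n : ℤ) (v : V) :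
    (Function.support fun j => NO a n j v).Finite := by
  obtain ⟨N, hN⟩ := hs v
  apply Set.Finite.subset (Set.finite_Ioo (n - N) N)
  intro j hj
  simp only [Function.mem_support] at hj
  by_contra hmem
  apply hj
  simp only [Set.mem_Ioo, not_and_or, not_lt] at hmem
  unfold NO
  by_cases h : n - j ≤ j
  · rw [if_pos h]
    have hjN : N ≤ j := by omega
    rw [Module.End.mul_apply, hN j hjN, map_zero]
  · rw [if_neg h]
    have hjN : N ≤ n - j := by omega
    rw [Module.End.mul_apply, hN (n - j) hjN, map_zero]

section Part2
variable (a)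
variable (hs : ∀ v : V, ∃ N : ℤ, ∀ n : ℤ, N ≤ n → a n v = 0)

/-- The Sugawara operator `S n v = ∑ᶠ j, :a_{n-j} a_j: v`. -/
def Sop (n : ℤ) : Module.End ℂ V where
  toFun v := ∑ᶠ j, NO a n j v
  map_add' x y := by
    rw [← finsum_add_distrib (NO_support_finite hs n x) (NO_support_finite hs n y)]
    exact finsum_congr fun j => map_add (NO a n j) x y
  map_smul' r x := by
    simp only [RingHom.id_apply]
    rw [smul_finsum' r (NO_support_finite hs n x)]
    exact finsum_congr fun j => map_smul (NO a n j) r x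

lemma Sop_apply (n : ℤ) (v : V) : Sop a hs n v = ∑ᶠ j, NO a n j v := rfl

end Part2

section Part3
variable (hs : ∀ v : V, ∃ N : ℤ, ∀ n : ℤ, N ≤ n → a n v = 0)
include hs

lemma comp_support_finite (T : Module.End ℂ V) (n : ℤ) (v : V) :
    (Function.support fun j => T (NO a n j v)).Finite := by
  apply Set.Finite.subset (NO_support_finite hs n v)
  intro j hj
  simp only [Function.mem_support] at hj ⊢
  intro h0
  rw [h0, map_zero] at hj
  exact hj rfl

lemma map_Sop (T : Module.End ℂ V) (n : ℤ) (v : V) :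
    T (Sop a hs n v) = ∑ᶠ j, T (NO a n j v) :=
  T.toAddMonoidHom.map_finsum (NO_support_finite hs n v)


omit hs in
lemma comm_mul (b1 b2 b3 x y : Module.End ℂ V)
    (h1 : b1 * b2 - b2 * b1 = x) (h2 : b1 * b3 - b3 * b1 = y) :
    b1 * (b2 * b3) - (b2 * b3) * b1 = x * b3 + b2 * y := by
  rw [← h1, ← h2]; noncomm_ring

omit hs in
lemma comm_a_NO
    (haa : ∀ n m : ℤ, a n * a m - a m * a n =
      (if n + m = 0 then 2 * η * (n : ℂ) else 0) • (1 : Module.End ℂ V))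
    (k n j : ℤ) :
    a k * NO a n j - NO a n j * a k =
      (if k + (n - j) = 0 then 2 * η * (k : ℂ) else 0) • a j +
        (if k + j = 0 then 2 * η * (k : ℂ) else 0) • a (n - j) := by
  rw [NO_eq haa n j]
  have hc : a k * (corr η n j • (1 : Module.End ℂ V)) = (corr η n j • 1) * a k := by
    rw [mul_smul_comm, smul_mul_assoc, mul_one, one_mul]
  have hexp : a k * (a (n - j) * a j - corr η n j • 1) -
      (a (n - j) * a j - corr η n j • 1) * a k =
      a k * (a (n - j) * a j) - (a (n - j) * a j) * a k := by
    rw [mul_sub, sub_mul, hc]; abel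
  rw [hexp, comm_mul (a k) (a (n - j)) (a j) _ _ (haa k (n - j)) (haa k j),
    smul_mul_assoc, one_mul, mul_smul_comm, mul_one]

omit hs in
lemma single_support_finite (p : ℤ) (f : ℤ → V) :
    (Function.support fun j => if j = p then f j else 0).Finite := by
  apply Set.Finite.subset (Set.finite_singleton p)
  intro j hj
  simp only [Function.mem_support] at hj
  by_contra h
  simp only [Set.mem_singleton_iff] at h
  rw [if_neg h] at hj
  exact hj rfl

lemma aS_comm
    (haa : ∀ n m : ℤ, a n * a m - a m * a n =
      (if n + m = 0 then 2 * η * (n : ℂ) else 0) • (1 : Module.End ℂ V))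
    (k n : ℤ) (v : V) :
    a k (Sop a hs n v) - Sop a hs n (a k v) = (4 * η * (k : ℂ)) • a (n + k) v := by
  rw [map_Sop hs (a k) n v, Sop_apply,
    ← finsum_sub_distrib (comp_support_finite hs (a k) n v) (NO_support_finite hs n (a k v))]
  have step : ∀ j : ℤ, a k (NO a n j v) - NO a n j (a k v) =
      (if j = n + k then (2 * η * (k : ℂ)) • a (n + k) v else 0) +
        (if j = -k then (2 * η * (k : ℂ)) • a (n + k) v else 0) := by
    intro j
    have h := DFunLike.congr_fun (comm_a_NO haa k n j) v
    simp only [LinearMap.sub_apply, Module.End.mul_apply, LinearMap.add_apply,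
      LinearMap.smul_apply] at h
    rw [h]
    congr 1
    · by_cases hj : j = n + k
      · rw [if_pos (by omega), if_pos hj, hj]
      · rw [if_neg (by omega), if_neg hj, zero_smul]
    · by_cases hj : j = -k
      · rw [if_pos (by omega), if_pos hj, hj, show n - -k = n + k from by omega]
      · rw [if_neg (by omega), if_neg hj, zero_smul]
  rw [finsum_congr step,
    finsum_add_distrib (single_support_finite (n + k) (fun _ => (2 * η * (k : ℂ)) • a (n + k) v))
      (single_support_finite (-k) (fun _ => (2 * η * (k : ℂ)) • a (n + k) v)),
    finsum_eq_single _ (n + k) (fun x hx => if_neg hx),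
    finsum_eq_single _ (-k) (fun x hx => if_neg hx), if_pos rfl, if_pos rfl, ← add_smul]
  congr 1
  ring


/-- anomaly scalar -/
def cc (η : ℂ) (k n j : ℤ) : ℂ :=
  (-((n : ℂ) - (j : ℂ))) * corr η (k + n) j + (-(j : ℂ)) * corr η (k + n) (k + j)

omit hs in
lemma comm_El_NO {El : ℤ → Module.End ℂ V}
    (haa : ∀ n m : ℤ, a n * a m - a m * a n =
      (if n + m = 0 then 2 * η * (n : ℂ) else 0) • (1 : Module.End ℂ V))
    (hLa : ∀ n m : ℤ, El n * a m - a m * El n = (-(m : ℂ)) • a (n + m))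
    (k n j : ℤ) :
    El k * NO a n j - NO a n j * El k =
      (-((n : ℂ) - (j : ℂ))) • NO a (k + n) j + (-(j : ℂ)) • NO a (k + n) (k + j) +
        cc η k n j • 1 := by
  rw [NO_eq haa n j]
  have hc : El k * (corr η n j • (1 : Module.End ℂ V)) = (corr η n j • 1) * El k := by
    rw [mul_smul_comm, smul_mul_assoc, mul_one, one_mul]
  have hexp : El k * (a (n - j) * a j - corr η n j • 1) -
      (a (n - j) * a j - corr η n j • 1) * El k =
      El k * (a (n - j) * a j) - (a (n - j) * a j) * El k := by
    rw [mul_sub, sub_mul, hc]; abel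
  rw [hexp, comm_mul (El k) (a (n - j)) (a j) _ _ (hLa k (n - j)) (hLa k j)]
  have e1 : a (k + (n - j)) = a (k + n - j) := by rw [show k + (n - j) = k + n - j from by ring]
  have e2 : a (k + n - j) * a j = NO a (k + n) j + corr η (k + n) j • 1 := NO_prod_eq haa (k + n) j
  have e3 : a (n - j) * a (k + j) = NO a (k + n) (k + j) + corr η (k + n) (k + j) • 1 := by
    have := NO_prod_eq haa (k + n) (k + j)
    rwa [show k + n - (k + j) = n - j from by ring] at this
  rw [smul_mul_assoc, mul_smul_comm, e1, e2, e3]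
  unfold cc
  match_scalars <;> ring

omit hs in
lemma cc_eq_zero (k n : ℤ) (hkn : k + n ≠ 0) (j : ℤ) : cc η k n j = 0 := by
  unfold cc corr
  rw [if_neg (by tauto), if_neg (by tauto)]
  ring

omit hs in
lemma cc_eq (k n : ℤ) (hkn : k + n = 0) (j : ℤ) :
    cc η k n j = (if j < 0 then 2 * η * (j : ℂ) * ((n : ℂ) - (j : ℂ)) else 0) -
      (if j < n then 2 * η * (j : ℂ) * ((n : ℂ) - (j : ℂ)) else 0) := by
  have hk : k = -n := by omega
  subst hk
  unfold cc corr
  have h1 : (-n + n = 0 ∧ j < 0) ↔ j < 0 := by constructor <;> intro h <;> [exact h.2; exact ⟨by omega, h⟩]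
  have h2 : (-n + n = 0 ∧ -n + j < 0) ↔ j < n := by constructor <;> intro h <;> [omega; exact ⟨by omega, by omega⟩]
  rw [if_congr h1 rfl rfl, if_congr h2 rfl rfl]
  split_ifs with ha hb hb <;> push_cast <;> ring

omit hs in
lemma cc_support_finite (k n : ℤ) :
    (Function.support fun j => cc η k n j).Finite := by
  by_cases hkn : k + n = 0
  · apply Set.Finite.subset (Set.finite_Icc (min n 0) (max n 0))
    intro j hj
    simp only [Function.mem_support] at hj
    by_contra hmem
    simp only [Set.mem_Icc, not_and_or, not_le, not_le] at hmem
    apply hj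
    rw [cc_eq k n hkn j]
    rcases hmem with h | h
    · rw [if_pos (by omega), if_pos (by omega)]; ring
    · rw [if_neg (by omega), if_neg (by omega)]; ring
  · apply Set.Finite.subset (Set.finite_empty)
    intro j hj
    simp only [Function.mem_support] at hj
    exact absurd (cc_eq_zero k n hkn j) hj


omit hs in
lemma gauss (N : ℕ) : ∑ i ∈ Finset.range N, (i : ℂ) = (N : ℂ) * ((N : ℂ) - 1) / 2 := by
  induction N with
  | zero => simp
  | succ n ih => rw [Finset.sum_range_succ, ih]; push_cast; ring

omit hs in
lemma sum_cube (N : ℕ) :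
    ∑ i ∈ Finset.range N, (i : ℂ) * ((N : ℂ) - (i : ℂ)) = ((N : ℂ) ^ 3 - (N : ℂ)) / 6 := by
  induction N with
  | zero => simp
  | succ n ih =>
    rw [Finset.sum_range_succ]
    have : ∀ i ∈ Finset.range n, (i : ℂ) * (((n : ℕ) + 1 : ℂ) - (i : ℂ)) =
        (i : ℂ) * ((n : ℂ) - (i : ℂ)) + (i : ℂ) := by
      intro i _; push_cast; ring
    rw [Finset.sum_congr rfl (by intro i hi; push_cast; exact this i hi), Finset.sum_add_distrib,
      ih, gauss]
    push_cast; ring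

omit hs in
lemma cc_finsum (k n : ℤ) (hkn : k + n = 0) :
    ∑ᶠ j, cc η k n j = η / 3 * ((k : ℂ) ^ 3 - (k : ℂ)) := by
  have hsub : (Function.support fun j => cc η k n j) ⊆ ↑(Finset.Ico (min n 0) (max n 0)) := by
    intro j hj
    simp only [Function.mem_support] at hj
    by_contra hmem
    simp only [Finset.coe_Ico, Set.mem_Ico, not_and_or, not_le, not_lt] at hmem
    apply hj
    rw [cc_eq k n hkn j]
    rcases hmem with h | h
    · rw [if_pos (by omega), if_pos (by omega)]; ring
    · rw [if_neg (by omega), if_neg (by omega)]; ring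
  rw [finsum_eq_sum_of_support_subset _ hsub]
  by_cases hn : 0 ≤ n
  · have hk : (k : ℂ) = -((n.toNat : ℕ) : ℂ) := by
      have : ((n.toNat : ℕ) : ℤ) = n := Int.toNat_of_nonneg hn
      have hk' : k = -((n.toNat : ℕ) : ℤ) := by omega
      rw [hk']; push_cast; ring
    rw [min_eq_right hn, max_eq_left hn]
    have hbij : ∑ j ∈ Finset.Ico (0 : ℤ) n, cc η k n j =
        ∑ i ∈ Finset.range n.toNat, (-(2 * η)) * ((i : ℂ) * ((n.toNat : ℂ) - (i : ℂ))) := by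
      refine Finset.sum_nbij' (fun j => j.toNat) (fun i => (i : ℤ)) ?_ ?_ ?_ ?_ ?_
      · intro j hj; simp only [Finset.mem_Ico] at hj; simp only [Finset.mem_range]; omega
      · intro i hi; simp only [Finset.mem_range] at hi; simp only [Finset.mem_Ico]; omega
      · intro j hj; simp only [Finset.mem_Ico] at hj; omega
      · intro i _; simp
      · intro j hj
        simp only [Finset.mem_Ico] at hj
        rw [cc_eq k n hkn j, if_neg (by omega), if_pos (by omega)]
        have h1 : ((j.toNat : ℕ) : ℂ) = (j : ℂ) := by
          have : ((j.toNat : ℕ) : ℤ) = j := Int.toNat_of_nonneg hj.1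
          exact_mod_cast congrArg (Int.cast : ℤ → ℂ) this
        have h2 : ((n.toNat : ℕ) : ℂ) = (n : ℂ) := by
          have : ((n.toNat : ℕ) : ℤ) = n := Int.toNat_of_nonneg hn
          exact_mod_cast congrArg (Int.cast : ℤ → ℂ) this
        rw [h1, h2]; ring
    rw [hbij, ← Finset.mul_sum, sum_cube, hk]
    ring
  · push_neg at hn
    have hmn : ((-n).toNat : ℤ) = -n := Int.toNat_of_nonneg (by omega)
    have hM : (((-n).toNat : ℕ) : ℂ) = -(n : ℂ) := by exact_mod_cast congrArg (Int.cast : ℤ → ℂ) hmn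
    have hk : (k : ℂ) = (((-n).toNat : ℕ) : ℂ) := by
      rw [hM]
      have : k = -n := by omega
      rw [this]; push_cast; ring
    rw [min_eq_left (by omega), max_eq_right (by omega)]
    have hbij : ∑ j ∈ Finset.Ico n (0 : ℤ), cc η k n j =
        ∑ i ∈ Finset.range (-n).toNat, (2 * η) * ((i : ℂ) * (((-n).toNat : ℂ) - (i : ℂ))) := by
      refine Finset.sum_nbij' (fun j => (j - n).toNat) (fun i => n + (i : ℤ)) ?_ ?_ ?_ ?_ ?_
      · intro j hj; simp only [Finset.mem_Ico] at hj; simp only [Finset.mem_range]; omega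
      · intro i hi; simp only [Finset.mem_range] at hi; simp only [Finset.mem_Ico]; omega
      · intro j hj; simp only [Finset.mem_Ico] at hj; omega
      · intro i hi; simp only [Finset.mem_range] at hi; omega
      · intro j hj
        simp only [Finset.mem_Ico] at hj
        rw [cc_eq k n hkn j, if_pos (by omega), if_neg (by omega)]
        have h1 : (((j - n).toNat : ℕ) : ℂ) = (j : ℂ) - (n : ℂ) := by
          have : (((j - n).toNat : ℕ) : ℤ) = j - n := Int.toNat_of_nonneg (by omega)
          have := congrArg (Int.cast : ℤ → ℂ) this
          push_cast at this
          exact_mod_cast this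
        rw [h1, hM]
        ring
    rw [hbij, ← Finset.mul_sum, sum_cube, hk]
    ring


omit hs in
lemma smul_support_finite {f : ℤ → V} (hf : (Function.support f).Finite) (c : ℤ → ℂ) :
    (Function.support fun j => c j • f j).Finite := by
  apply hf.subset
  intro j hj
  simp only [Function.mem_support] at hj ⊢
  contrapose! hj
  rw [hj, smul_zero]

lemma shift_support_finite (m k : ℤ) (v : V) :
    (Function.support fun j => NO a m (k + j) v).Finite := by
  have h : (Function.support fun j => NO a m (k + j) v) =
      (fun j => k + j) ⁻¹' (Function.support fun i => NO a m i v) := rfl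
  rw [h]
  exact (NO_support_finite hs m v).preimage (Set.injOn_of_injective (add_right_injective k))

lemma El_S_comm {El : ℤ → Module.End ℂ V}
    (haa : ∀ n m : ℤ, a n * a m - a m * a n =
      (if n + m = 0 then 2 * η * (n : ℂ) else 0) • (1 : Module.End ℂ V))
    (hLa : ∀ n m : ℤ, El n * a m - a m * El n = (-(m : ℂ)) • a (n + m))
    (k n : ℤ) (v : V) :
    El k (Sop a hs n v) - Sop a hs n (El k v) =
      ((k : ℂ) - (n : ℂ)) • Sop a hs (k + n) v +
        (if k + n = 0 then η / 3 * ((k : ℂ) ^ 3 - (k : ℂ)) else 0) • v := by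
  have fin1 : (Function.support fun j : ℤ => (-((n : ℂ) - (j : ℂ))) • NO a (k + n) j v).Finite :=
    smul_support_finite (NO_support_finite hs (k + n) v) _
  have fin2 : (Function.support fun j : ℤ => (-(j : ℂ)) • NO a (k + n) (k + j) v).Finite :=
    smul_support_finite (shift_support_finite hs (k + n) k v) _
  have fin2' : (Function.support fun j : ℤ => (-(((j - k : ℤ)) : ℂ)) • NO a (k + n) j v).Finite :=
    smul_support_finite (NO_support_finite hs (k + n) v) _
  have fin12 : (Function.support fun j : ℤ => (-((n : ℂ) - (j : ℂ))) • NO a (k + n) j v +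
      (-(j : ℂ)) • NO a (k + n) (k + j) v).Finite := by
    apply (fin1.union fin2).subset
    exact Function.support_add _ _
  have fin3 : (Function.support fun j : ℤ => cc η k n j • v).Finite := by
    apply (cc_support_finite (η := η) k n).subset
    intro j hj
    simp only [Function.mem_support] at hj ⊢
    contrapose! hj
    rw [hj, zero_smul]
  rw [map_Sop hs (El k) n v, Sop_apply,
    ← finsum_sub_distrib (comp_support_finite hs (El k) n v) (NO_support_finite hs n (El k v))]
  have step : ∀ j : ℤ, El k (NO a n j v) - NO a n j (El k v) =
      ((-((n : ℂ) - (j : ℂ))) • NO a (k + n) j v + (-(j : ℂ)) • NO a (k + n) (k + j) v) +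
        cc η k n j • v := by
    intro j
    have h := DFunLike.congr_fun (comm_El_NO haa hLa k n j) v
    simp only [LinearMap.sub_apply, Module.End.mul_apply, LinearMap.add_apply,
      LinearMap.smul_apply, Module.End.one_apply] at h
    rw [h]
  rw [finsum_congr step, finsum_add_distrib fin12 fin3, finsum_add_distrib fin1 fin2]
  have hT2 : (∑ᶠ j : ℤ, (-(j : ℂ)) • NO a (k + n) (k + j) v) =
      ∑ᶠ i : ℤ, (-(((i - k : ℤ)) : ℂ)) • NO a (k + n) i v := by
    have e1 : (fun j : ℤ => (-(j : ℂ)) • NO a (k + n) (k + j) v) =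
        fun j : ℤ => (-(((k + j - k : ℤ)) : ℂ)) • NO a (k + n) (k + j) v := by
      funext j
      rw [add_sub_cancel_left]
    rw [e1]
    exact finsum_comp_equiv (Equiv.addLeft k)
      (f := fun i : ℤ => (-(((i - k : ℤ)) : ℂ)) • NO a (k + n) i v)
  rw [hT2, ← finsum_add_distrib fin1 fin2']
  have comb : ∀ j : ℤ, (-((n : ℂ) - (j : ℂ))) • NO a (k + n) j v +
      (-(((j - k : ℤ)) : ℂ)) • NO a (k + n) j v =
      ((k : ℂ) - (n : ℂ)) • NO a (k + n) j v := by
    intro j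
    rw [← add_smul]
    congr 1
    push_cast
    ring
  rw [finsum_congr comb, ← smul_finsum' ((k : ℂ) - (n : ℂ)) (NO_support_finite hs (k + n) v),
    ← Sop_apply a hs (k + n) v, ← finsum_smul' (cc_support_finite (η := η) k n) v]
  by_cases hkn : k + n = 0
  · rw [if_pos hkn, cc_finsum k n hkn]
  · rw [if_neg hkn]
    have hz : ∑ᶠ j, cc η k n j = 0 := by
      rw [finsum_congr (cc_eq_zero (η := η) k n hkn)]
      exact finsum_zero
    rw [hz]


omit hs in
lemma sub_support_finite {f g : ℤ → V} (hf : (Function.support f).Finite)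
    (hg : (Function.support g).Finite) :
    (Function.support fun j => f j - g j).Finite := by
  apply (hf.union hg).subset
  intro j hj
  rw [Function.mem_support] at hj
  by_contra hmem
  simp only [Set.mem_union, Function.mem_support, not_or, not_not] at hmem
  simp [hmem.1, hmem.2] at hj

lemma SS_term {El : ℤ → Module.End ℂ V}
    (haa : ∀ n m : ℤ, a n * a m - a m * a n =
      (if n + m = 0 then 2 * η * (n : ℂ) else 0) • (1 : Module.End ℂ V))
    (hLa : ∀ n m : ℤ, El n * a m - a m * El n = (-(m : ℂ)) • a (n + m))
    (n m j : ℤ) (v : V) :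
    Sop a hs n (NO a m j v) - NO a m j (Sop a hs n v) =
      (4 * η) • (El n (NO a m j v) - NO a m j (El n v)) := by
  have hQ : ∀ w : V, Sop a hs n (a j w) =
      a j (Sop a hs n w) - (4 * η * (j : ℂ)) • a (n + j) w := by
    intro w
    have h := aS_comm hs haa j n w
    rw [← h]; abel
  have hP : ∀ w : V, Sop a hs n (a (m - j) w) =
      a (m - j) (Sop a hs n w) - (4 * η * ((m - j : ℤ) : ℂ)) • a (n + (m - j)) w := by
    intro w
    have h := aS_comm hs haa (m - j) n w
    rw [← h]; abel
  have hQE : ∀ w : V, El n (a j w) = a j (El n w) - (j : ℂ) • a (n + j) w := by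
    intro w
    have h := DFunLike.congr_fun (hLa n j) w
    simp only [LinearMap.sub_apply, Module.End.mul_apply, LinearMap.smul_apply] at h
    rw [sub_eq_iff_eq_add] at h
    rw [h]; module
  have hPE : ∀ w : V, El n (a (m - j) w) =
      a (m - j) (El n w) - ((m - j : ℤ) : ℂ) • a (n + (m - j)) w := by
    intro w
    have h := DFunLike.congr_fun (hLa n (m - j)) w
    simp only [LinearMap.sub_apply, Module.End.mul_apply, LinearMap.smul_apply] at h
    rw [sub_eq_iff_eq_add] at h
    rw [h]; module
  have hNO : ∀ w : V, NO a m j w = a (m - j) (a j w) - corr η m j • w := by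
    intro w
    have h := DFunLike.congr_fun (NO_eq haa m j) w
    simpa only [LinearMap.sub_apply, Module.End.mul_apply, LinearMap.smul_apply,
      Module.End.one_apply] using h
  rw [hNO v, hNO (Sop a hs n v), hNO (El n v)]
  rw [map_sub (Sop a hs n), map_smul (Sop a hs n), hP (a j v), hQ v,
    map_sub (a (m - j)), map_smul (a (m - j)),
    map_sub (El n), map_smul (El n), hPE (a j v), hQE v,
    map_sub (a (m - j)), map_smul (a (m - j))]
  match_scalars <;> ring

lemma SS_comm {El : ℤ → Module.End ℂ V}
    (haa : ∀ n m : ℤ, a n * a m - a m * a n =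
      (if n + m = 0 then 2 * η * (n : ℂ) else 0) • (1 : Module.End ℂ V))
    (hLa : ∀ n m : ℤ, El n * a m - a m * El n = (-(m : ℂ)) • a (n + m))
    (n m : ℤ) (v : V) :
    Sop a hs n (Sop a hs m v) - Sop a hs m (Sop a hs n v) =
      (4 * η) • (El n (Sop a hs m v) - Sop a hs m (El n v)) := by
  rw [map_Sop hs (Sop a hs n) m v, Sop_apply a hs m (Sop a hs n v),
    ← finsum_sub_distrib (comp_support_finite hs (Sop a hs n) m v)
      (NO_support_finite hs m (Sop a hs n v)),
    map_Sop hs (El n) m v, Sop_apply a hs m (El n v),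
    ← finsum_sub_distrib (comp_support_finite hs (El n) m v)
      (NO_support_finite hs m (El n v)),
    smul_finsum' (4 * η) (sub_support_finite (comp_support_finite hs (El n) m v)
      (NO_support_finite hs m (El n v)))]
  exact finsum_congr fun j => SS_term hs haa hLa n m j v

end Part3
end Statement3Proof

open Statement3Proof in

/-- Let `(𝓛ₙ, aₙ)` be a smooth module structure for the `W₂` algebra with
central charges `(c, η)`, `η ≠ 0`.  Setting `Lₙ = 𝓛ₙ − (1/(4η)) Σₘ :a_{n−m} aₘ:`
(the normal ordering being `:a_i a_j: = a_i a_j` for `i ≤ j` and `a_j a_i` otherwise; the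
sum is finite on each vector by smoothness), the operators `Lₙ, aₙ` satisfy the commutation
relations of the direct sum of a Virasoro algebra with central charge `ĉ = c − 1` and the
Heisenberg algebra: `[Lₙ, Lₘ] = (n−m)L_{n+m} + ((c−1)/12)(n³−n)δ_{n+m,0}`,
`[aₙ, aₘ] = 2ηn δ_{n+m,0}`, `[Lₙ, aₘ] = 0`. -/
theorem statement3 (c η : ℂ) (hη : η ≠ 0)
    (V : Type*) [AddCommGroup V] [Module ℂ V]
    (El a : ℤ → Module.End ℂ V)
    (hLL : ∀ n m : ℤ,
      El n * El m - El m * El n =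
        ((n : ℂ) - (m : ℂ)) • El (n + m) +
          (if n + m = 0 then c / 12 * ((n : ℂ) ^ 3 - (n : ℂ)) else 0) • (1 : Module.End ℂ V))
    (haa : ∀ n m : ℤ,
      a n * a m - a m * a n =
        (if n + m = 0 then 2 * η * (n : ℂ) else 0) • (1 : Module.End ℂ V))
    (hLa : ∀ n m : ℤ, El n * a m - a m * El n = (-(m : ℂ)) • a (n + m))
    (hsmooth : ∀ v : V, ∃ N : ℤ, ∀ n : ℤ, N ≤ n → a n v = 0)
    (L : ℤ → Module.End ℂ V)
    (hL : ∀ (n : ℤ) (v : V),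
      L n v = El n v -
        (1 / (4 * η)) •
          ∑ᶠ m : ℤ, (if n - m ≤ m then a (n - m) * a m else a m * a (n - m)) v) :
    (∀ n m : ℤ,
      L n * L m - L m * L n =
        ((n : ℂ) - (m : ℂ)) • L (n + m) +
          (if n + m = 0 then (c - 1) / 12 * ((n : ℂ) ^ 3 - (n : ℂ)) else 0) •
            (1 : Module.End ℂ V)) ∧
    (∀ n m : ℤ,
      a n * a m - a m * a n =
        (if n + m = 0 then 2 * η * (n : ℂ) else 0) • (1 : Module.End ℂ V)) ∧
    (∀ n m : ℤ, L n * a m = a m * L n) := by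
  have hL' : ∀ (n : ℤ) (v : V), L n v = El n v - (1 / (4 * η)) • Sop a hsmooth n v := by
    intro n v
    rw [hL n v]
    rfl
  refine ⟨?_, haa, ?_⟩
  · -- Virasoro relation
    intro n m
    ext v
    simp only [LinearMap.sub_apply, Module.End.mul_apply, LinearMap.add_apply,
      LinearMap.smul_apply, Module.End.one_apply]
    rw [hL' n (L m v), hL' m (L n v), hL' m v, hL' n v, hL' (n + m) v,
      map_sub (El n), map_smul (El n), map_sub (Sop a hsmooth n), map_smul (Sop a hsmooth n),
      map_sub (El m), map_smul (El m), map_sub (Sop a hsmooth m), map_smul (Sop a hsmooth m)]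
    have hEE := DFunLike.congr_fun (hLL n m) v
    simp only [LinearMap.sub_apply, Module.End.mul_apply, LinearMap.add_apply,
      LinearMap.smul_apply, Module.End.one_apply] at hEE
    rw [sub_eq_iff_eq_add] at hEE
    have hSS := SS_comm hsmooth haa hLa n m v
    rw [sub_eq_iff_eq_add] at hSS
    have hC := El_S_comm hsmooth haa hLa m n v
    rw [show m + n = n + m from add_comm m n] at hC
    rw [sub_eq_iff_eq_add] at hC
    rw [hEE, hSS, hC]
    by_cases hnm : n + m = 0
    · simp only [if_pos hnm]
      have hm : (m : ℂ) = -(n : ℂ) := by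
        have : m = -n := by omega
        rw [this]; push_cast; ring
      rw [hm]
      match_scalars <;> field_simp <;> ring
    · simp only [if_neg hnm]
      match_scalars <;> field_simp <;> ring
  · -- [L, a] = 0
    intro n m
    ext v
    simp only [Module.End.mul_apply]
    rw [hL' n (a m v), hL' n v, map_sub (a m), map_smul (a m)]
    have hE := DFunLike.congr_fun (hLa n m) v
    simp only [LinearMap.sub_apply, Module.End.mul_apply, LinearMap.smul_apply] at hE
    rw [sub_eq_iff_eq_add] at hE
    have hA := aS_comm hsmooth haa m n v
    rw [sub_eq_iff_eq_add] at hA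
    rw [hE, hA]
    match_scalars <;> field_simp <;> ring

end
end

section
/- Let M be the ghost Fock module for the two fermionic pairs (b, c) and (ψ, χ), and let L^M_n (n ∈ ℤ) denote the modes of the field L^M(z) = 2:∂b(z)c(z): + :b(z)∂c(z): + :∂ψ(z)χ(z):. Then the operators L^M_n satisfy the Virasoro relations with central charge −28: [L^M_n, L^M_m] = (n−m) L^M_{n+m} − (28/12)(n³−n) δ_{n+m,0}. -/
noncomputable section

/-- The ghost Fock module for the two fermionic pairs `(b, c)` and `(ψ, χ)`:
odd modes with the stated anticommutation relations, a nonzero vacuum vector `𝟏` with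
`cₖ𝟏 = 0 (k ≥ 2)`, `bₖ𝟏 = 0 (k ≥ −1)`, `ψₖ𝟏 = 0 (k ≥ 1)`, `χₖ𝟏 = 0 (k ≥ 0)`,
which generates the module. -/
structure GhostFock (M : Type*) [AddCommGroup M] [Module ℂ M] where
  b : ℤ → Module.End ℂ M
  c : ℤ → Module.End ℂ M
  ψ : ℤ → Module.End ℂ M
  χ : ℤ → Module.End ℂ M
  acomm_bc : ∀ n m : ℤ, b n * c m + c m * b n =
    (if n + m = 0 then (1 : ℂ) else 0) • (1 : Module.End ℂ M)
  acomm_bb : ∀ n m : ℤ, b n * b m + b m * b n = 0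
  acomm_cc : ∀ n m : ℤ, c n * c m + c m * c n = 0
  acomm_ψχ : ∀ n m : ℤ, ψ n * χ m + χ m * ψ n =
    (if n + m = 0 then (1 : ℂ) else 0) • (1 : Module.End ℂ M)
  acomm_ψψ : ∀ n m : ℤ, ψ n * ψ m + ψ m * ψ n = 0
  acomm_χχ : ∀ n m : ℤ, χ n * χ m + χ m * χ n = 0
  acomm_bψ : ∀ n m : ℤ, b n * ψ m + ψ m * b n = 0
  acomm_bχ : ∀ n m : ℤ, b n * χ m + χ m * b n = 0
  acomm_cψ : ∀ n m : ℤ, c n * ψ m + ψ m * c n = 0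
  acomm_cχ : ∀ n m : ℤ, c n * χ m + χ m * c n = 0
  vac : M
  vac_ne : vac ≠ 0
  c_vac : ∀ k : ℤ, 2 ≤ k → c k vac = 0
  b_vac : ∀ k : ℤ, -1 ≤ k → b k vac = 0
  ψ_vac : ∀ k : ℤ, 1 ≤ k → ψ k vac = 0
  χ_vac : ∀ k : ℤ, 0 ≤ k → χ k vac = 0
  generates : ∀ N : Submodule ℂ M, vac ∈ N →
    (∀ (n : ℤ) (x : M), x ∈ N → b n x ∈ N ∧ c n x ∈ N ∧ ψ n x ∈ N ∧ χ n x ∈ N) →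
    N = ⊤

variable {M : Type*} [AddCommGroup M] [Module ℂ M]

/-- The normal-ordered quadratic `:b_i c_j:` (annihilation operators, i.e. `b_i` with
`i ≥ −1` and `c_j` with `j ≥ 2`, are moved to the right with the sign of the odd
permutation). -/
def GhostFock.nobc (G : GhostFock M) (i j : ℤ) : Module.End ℂ M :=
  if i ≤ -2 then G.b i * G.c j else -(G.c j * G.b i)

/-- The normal-ordered quadratic `:ψ_i χ_j:` (`ψ_i` annihilates for `i ≥ 1`). -/
def GhostFock.noψχ (G : GhostFock M) (i j : ℤ) : Module.End ℂ M :=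
  if i ≤ 0 then G.ψ i * G.χ j else -(G.χ j * G.ψ i)

set_option linter.unusedSectionVars false
namespace VirasoroAux

open Function

def cf (n s : ℤ) : ℂ := 2 * (-(s : ℂ) - 2) + ((s : ℂ) - (n : ℂ) + 1)
def cg (s : ℤ) : ℂ := -(s : ℂ)

lemma move3 (x y z : Module.End ℂ M) (s t : ℂ)
    (hxy : x * y + y * x = s • 1) (hxz : x * z + z * x = t • 1) :
    y * z * x = x * (y * z) + t • y - s • z := by
  have h1 : z * x = t • (1 : Module.End ℂ M) - x * z := by
    rw [eq_sub_iff_add_eq, add_comm]; exact hxz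
  have h2 : y * x = s • (1 : Module.End ℂ M) - x * y := by
    rw [eq_sub_iff_add_eq, add_comm]; exact hxy
  rw [mul_assoc, h1, mul_sub, mul_smul_comm, mul_one, ← mul_assoc, h2, sub_mul,
    smul_mul_assoc, one_mul, mul_assoc]
  abel

lemma comm_through (x y z y' z' : Module.End ℂ M) (p q : ℂ)
    (hy : x * y = y * x + p • y') (hz : x * z = z * x + q • z') :
    x * (y * z) = (y * z) * x + p • (y' * z) + q • (y * z') := by
  rw [← mul_assoc, hy, add_mul, smul_mul_assoc, mul_assoc, hz, mul_add, mul_smul_comm,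
    ← mul_assoc]
  abel

section Pair

variable (B C : ℤ → Module.End ℂ M) (θ : ℤ)

def NO (i j : ℤ) : Module.End ℂ M := if i ≤ θ then B i * C j else -(C j * B i)

lemma NO_mul_B
    (hBC : ∀ n m : ℤ, B n * C m + C m * B n = (if n + m = 0 then (1 : ℂ) else 0) • 1)
    (hBB : ∀ n m : ℤ, B n * B m + B m * B n = 0) (s j k : ℤ) :
    NO B C θ s j * B k = B k * NO B C θ s j + (if j + k = 0 then (1 : ℂ) else 0) • B s := by
  have hδ : (if k + j = 0 then (1 : ℂ) else 0) = (if j + k = 0 then (1 : ℂ) else 0) := by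
    rw [add_comm]
  unfold NO
  by_cases h : s ≤ θ
  · rw [if_pos h]
    have h0 : B k * B s + B s * B k = (0 : ℂ) • 1 := by rw [zero_smul]; exact hBB k s
    have hm := move3 (B k) (B s) (C j) 0 (if k + j = 0 then (1 : ℂ) else 0) h0 (hBC k j)
    rw [hδ] at hm
    rw [hm]; module
  · rw [if_neg h]
    have h0 : B k * B s + B s * B k = (0 : ℂ) • 1 := by rw [zero_smul]; exact hBB k s
    have hm := move3 (B k) (C j) (B s) (if k + j = 0 then (1 : ℂ) else 0) 0 (hBC k j) h0
    rw [hδ] at hm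
    rw [neg_mul, hm, mul_neg]; module

lemma NO_mul_C
    (hBC : ∀ n m : ℤ, B n * C m + C m * B n = (if n + m = 0 then (1 : ℂ) else 0) • 1)
    (hCC : ∀ n m : ℤ, C n * C m + C m * C n = 0) (s j k : ℤ) :
    NO B C θ s j * C k = C k * NO B C θ s j - (if s + k = 0 then (1 : ℂ) else 0) • C j := by
  have hBC' : C k * B s + B s * C k = (if s + k = 0 then (1 : ℂ) else 0) • 1 := by
    rw [add_comm]; exact hBC s k
  have h0 : C k * C j + C j * C k = (0 : ℂ) • 1 := by rw [zero_smul]; exact hCC k j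
  unfold NO
  by_cases h : s ≤ θ
  · rw [if_pos h]
    have hm := move3 (C k) (B s) (C j) (if s + k = 0 then (1 : ℂ) else 0) 0 hBC' h0
    rw [hm]; module
  · rw [if_neg h]
    have hm := move3 (C k) (C j) (B s) 0 (if s + k = 0 then (1 : ℂ) else 0) h0 hBC'
    rw [neg_mul, hm, mul_neg]; module

lemma NO_mul_X (X : ℤ → Module.End ℂ M)
    (hXB : ∀ k m : ℤ, X k * B m + B m * X k = 0)
    (hXC : ∀ k m : ℤ, X k * C m + C m * X k = 0) (s j k : ℤ) :
    NO B C θ s j * X k = X k * NO B C θ s j := by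
  have h1 : X k * B s + B s * X k = (0 : ℂ) • 1 := by rw [zero_smul]; exact hXB k s
  have h2 : X k * C j + C j * X k = (0 : ℂ) • 1 := by rw [zero_smul]; exact hXC k j
  unfold NO
  by_cases h : s ≤ θ
  · rw [if_pos h]
    have hm := move3 (X k) (B s) (C j) 0 0 h1 h2
    rw [hm]; module
  · rw [if_neg h]
    have hm := move3 (X k) (C j) (B s) 0 0 h2 h1
    rw [neg_mul, hm, mul_neg]; module

lemma B_mul_C
    (hBC : ∀ n m : ℤ, B n * C m + C m * B n = (if n + m = 0 then (1 : ℂ) else 0) • 1)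
    (a b : ℤ) :
    B a * C b = NO B C θ a b + (if θ < a ∧ a + b = 0 then (1 : ℂ) else 0) • 1 := by
  unfold NO
  by_cases h : a ≤ θ
  · rw [if_pos h, if_neg (fun hc => absurd hc.1 (not_lt.mpr h)), zero_smul, add_zero]
  · rw [if_neg h]
    have h2 : B a * C b = (if a + b = 0 then (1 : ℂ) else 0) • 1 - C b * B a :=
      eq_sub_of_add_eq (hBC a b)
    have h3 : (if θ < a ∧ a + b = 0 then (1 : ℂ) else 0) = (if a + b = 0 then (1 : ℂ) else 0) := by
      simp [not_le.mp h]
    rw [h2, h3]; abel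

lemma C_mul_B
    (hBC : ∀ n m : ℤ, B n * C m + C m * B n = (if n + m = 0 then (1 : ℂ) else 0) • 1)
    (a b : ℤ) :
    C b * B a = (if a ≤ θ ∧ a + b = 0 then (1 : ℂ) else 0) • 1 - NO B C θ a b := by
  unfold NO
  by_cases h : a ≤ θ
  · rw [if_pos h]
    have h2 : C b * B a = (if a + b = 0 then (1 : ℂ) else 0) • 1 - B a * C b := by
      rw [eq_sub_iff_add_eq, add_comm]; exact hBC a b
    have h3 : (if a ≤ θ ∧ a + b = 0 then (1 : ℂ) else 0) = (if a + b = 0 then (1 : ℂ) else 0) := by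
      simp [h]
    rw [h2, h3]
  · rw [if_neg h, if_neg (fun hc => h hc.1), zero_smul, sub_neg_eq_add, zero_add]

lemma L_comm_NO (x : Module.End ℂ M) (n : ℤ) (p q : ℤ → ℂ)
    (hBC : ∀ n m : ℤ, B n * C m + C m * B n = (if n + m = 0 then (1 : ℂ) else 0) • 1)
    (hB : ∀ k, x * B k = B k * x + p k • B (n + k))
    (hC : ∀ k, x * C k = C k * x + q k • C (n + k)) (s j : ℤ) :
    x * NO B C θ s j = NO B C θ s j * x + p s • NO B C θ (n + s) j + q j • NO B C θ s (n + j)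
      + (p s * ((if s ≤ θ ∧ θ < n + s ∧ n + s + j = 0 then (1 : ℂ) else 0)
          - (if θ < s ∧ n + s ≤ θ ∧ n + s + j = 0 then (1 : ℂ) else 0))) • 1 := by
  by_cases h : s ≤ θ
  · have hNO : NO B C θ s j = B s * C j := if_pos h
    have key := comm_through x (B s) (C j) (B (n + s)) (C (n + j)) (p s) (q j) (hB s) (hC j)
    rw [hNO, key, B_mul_C B C θ hBC (n + s) j, B_mul_C B C θ hBC s (n + j),
      if_neg (show ¬(θ < s ∧ s + (n + j) = 0) from fun hc => absurd hc.1 (not_lt.mpr h))]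
    have e2 : (if s ≤ θ ∧ θ < n + s ∧ n + s + j = 0 then (1 : ℂ) else 0)
        = (if θ < n + s ∧ (n + s) + j = 0 then (1 : ℂ) else 0) := by
      simp [h, and_assoc]
    have e3 : (if θ < s ∧ n + s ≤ θ ∧ n + s + j = 0 then (1 : ℂ) else 0) = 0 :=
      if_neg (fun hc => absurd hc.1 (not_lt.mpr h))
    rw [e2, e3]
    module
  · have hNO : NO B C θ s j = -(C j * B s) := if_neg h
    have key := comm_through x (C j) (B s) (C (n + j)) (B (n + s)) (q j) (p s) (hC j) (hB s)
    rw [hNO, mul_neg, key, C_mul_B B C θ hBC s (n + j), C_mul_B B C θ hBC (n + s) j,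
      if_neg (show ¬(s ≤ θ ∧ s + (n + j) = 0) from fun hc => h hc.1)]
    have e2 : (if s ≤ θ ∧ θ < n + s ∧ n + s + j = 0 then (1 : ℂ) else 0) = 0 :=
      if_neg (fun hc => h hc.1)
    have e3 : (if θ < s ∧ n + s ≤ θ ∧ n + s + j = 0 then (1 : ℂ) else 0)
        = (if n + s ≤ θ ∧ (n + s) + j = 0 then (1 : ℂ) else 0) := by
      simp [not_le.mp h, and_assoc]
    rw [e2, e3]
    simp only [neg_mul]
    module

end Pair

section Concrete

variable (G : GhostFock M)

lemma nobc_mul_b (s j k : ℤ) :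
    G.nobc s j * G.b k = G.b k * G.nobc s j + (if j + k = 0 then (1 : ℂ) else 0) • G.b s :=
  NO_mul_B G.b G.c (-2) G.acomm_bc G.acomm_bb s j k

lemma nobc_mul_c (s j k : ℤ) :
    G.nobc s j * G.c k = G.c k * G.nobc s j - (if s + k = 0 then (1 : ℂ) else 0) • G.c j :=
  NO_mul_C G.b G.c (-2) G.acomm_bc G.acomm_cc s j k

lemma nobc_mul_ψ (s j k : ℤ) : G.nobc s j * G.ψ k = G.ψ k * G.nobc s j :=
  NO_mul_X G.b G.c (-2) G.ψ (fun k m => by rw [add_comm]; exact G.acomm_bψ m k)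
    (fun k m => by rw [add_comm]; exact G.acomm_cψ m k) s j k

lemma nobc_mul_χ (s j k : ℤ) : G.nobc s j * G.χ k = G.χ k * G.nobc s j :=
  NO_mul_X G.b G.c (-2) G.χ (fun k m => by rw [add_comm]; exact G.acomm_bχ m k)
    (fun k m => by rw [add_comm]; exact G.acomm_cχ m k) s j k

lemma noψχ_mul_ψ (s j k : ℤ) :
    G.noψχ s j * G.ψ k = G.ψ k * G.noψχ s j + (if j + k = 0 then (1 : ℂ) else 0) • G.ψ s :=
  NO_mul_B G.ψ G.χ 0 G.acomm_ψχ G.acomm_ψψ s j k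

lemma noψχ_mul_χ (s j k : ℤ) :
    G.noψχ s j * G.χ k = G.χ k * G.noψχ s j - (if s + k = 0 then (1 : ℂ) else 0) • G.χ j :=
  NO_mul_C G.ψ G.χ 0 G.acomm_ψχ G.acomm_χχ s j k

lemma noψχ_mul_b (s j k : ℤ) : G.noψχ s j * G.b k = G.b k * G.noψχ s j :=
  NO_mul_X G.ψ G.χ 0 G.b G.acomm_bψ G.acomm_bχ s j k

lemma noψχ_mul_c (s j k : ℤ) : G.noψχ s j * G.c k = G.c k * G.noψχ s j :=
  NO_mul_X G.ψ G.χ 0 G.c G.acomm_cψ G.acomm_cχ s j k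

-- applied (pointwise) versions
lemma nobc_mul_b_apply (s j k : ℤ) (w : M) :
    G.nobc s j (G.b k w)
      = G.b k (G.nobc s j w) + (if j + k = 0 then (1 : ℂ) else 0) • G.b s w := by
  have := congrArg (fun T : Module.End ℂ M => T w) (nobc_mul_b G s j k)
  simpa only [Module.End.mul_apply, LinearMap.add_apply, LinearMap.smul_apply] using this

lemma nobc_mul_c_apply (s j k : ℤ) (w : M) :
    G.nobc s j (G.c k w)
      = G.c k (G.nobc s j w) - (if s + k = 0 then (1 : ℂ) else 0) • G.c j w := by
  have := congrArg (fun T : Module.End ℂ M => T w) (nobc_mul_c G s j k)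
  simpa only [Module.End.mul_apply, LinearMap.sub_apply, LinearMap.smul_apply] using this

lemma nobc_mul_ψ_apply (s j k : ℤ) (w : M) :
    G.nobc s j (G.ψ k w) = G.ψ k (G.nobc s j w) := by
  have := congrArg (fun T : Module.End ℂ M => T w) (nobc_mul_ψ G s j k)
  simpa only [Module.End.mul_apply] using this

lemma nobc_mul_χ_apply (s j k : ℤ) (w : M) :
    G.nobc s j (G.χ k w) = G.χ k (G.nobc s j w) := by
  have := congrArg (fun T : Module.End ℂ M => T w) (nobc_mul_χ G s j k)
  simpa only [Module.End.mul_apply] using this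

lemma noψχ_mul_ψ_apply (s j k : ℤ) (w : M) :
    G.noψχ s j (G.ψ k w)
      = G.ψ k (G.noψχ s j w) + (if j + k = 0 then (1 : ℂ) else 0) • G.ψ s w := by
  have := congrArg (fun T : Module.End ℂ M => T w) (noψχ_mul_ψ G s j k)
  simpa only [Module.End.mul_apply, LinearMap.add_apply, LinearMap.smul_apply] using this

lemma noψχ_mul_χ_apply (s j k : ℤ) (w : M) :
    G.noψχ s j (G.χ k w)
      = G.χ k (G.noψχ s j w) - (if s + k = 0 then (1 : ℂ) else 0) • G.χ j w := by
  have := congrArg (fun T : Module.End ℂ M => T w) (noψχ_mul_χ G s j k)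
  simpa only [Module.End.mul_apply, LinearMap.sub_apply, LinearMap.smul_apply] using this

lemma noψχ_mul_b_apply (s j k : ℤ) (w : M) :
    G.noψχ s j (G.b k w) = G.b k (G.noψχ s j w) := by
  have := congrArg (fun T : Module.End ℂ M => T w) (noψχ_mul_b G s j k)
  simpa only [Module.End.mul_apply] using this

lemma noψχ_mul_c_apply (s j k : ℤ) (w : M) :
    G.noψχ s j (G.c k w) = G.c k (G.noψχ s j w) := by
  have := congrArg (fun T : Module.End ℂ M => T w) (noψχ_mul_c G s j k)
  simpa only [Module.End.mul_apply] using this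

end Concrete

section Finiteness

lemma fin_shift {f g : ℤ → M} (hf : (support f).Finite) (a : ℤ)
    (h : ∀ s, f s = 0 → s ≠ a → g s = 0) : (support g).Finite := by
  apply (hf.union (Set.finite_singleton a)).subset
  intro s hs
  rw [Function.mem_support] at hs
  rw [Set.mem_union, Function.mem_support, Set.mem_singleton_iff]
  by_contra hc
  push_neg at hc
  exact hs (h s hc.1 hc.2)

variable (G : GhostFock M)

lemma fin_all (w : M) (r : ℤ) :
    (support fun s => G.nobc s (r - s) w).Finite
      ∧ (support fun s => G.noψχ s (r - s) w).Finite := by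
  let P : M → Prop := fun v => ∀ r : ℤ,
    (support fun s => G.nobc s (r - s) v).Finite
      ∧ (support fun s => G.noψχ s (r - s) v).Finite
  suffices h : P w from h r
  let N : Submodule ℂ M :=
    { carrier := setOf P
      zero_mem' := by
        intro r
        constructor <;>
        · apply Set.Finite.subset Set.finite_empty
          intro s hs
          rw [Function.mem_support] at hs
          exact absurd (map_zero _) hs
      add_mem' := by
        intro a b ha hb r
        constructor
        · apply ((ha r).1.union (hb r).1).subset
          intro s hs
          rw [Function.mem_support] at hs
          rw [Set.mem_union, Function.mem_support, Function.mem_support]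
          by_contra hc
          push_neg at hc
          exact hs (by rw [map_add, hc.1, hc.2, add_zero])
        · apply ((ha r).2.union (hb r).2).subset
          intro s hs
          rw [Function.mem_support] at hs
          rw [Set.mem_union, Function.mem_support, Function.mem_support]
          by_contra hc
          push_neg at hc
          exact hs (by rw [map_add, hc.1, hc.2, add_zero])
      smul_mem' := by
        intro t a ha r
        constructor
        · apply ((ha r).1).subset
          intro s hs
          rw [Function.mem_support] at hs
          rw [Function.mem_support]
          intro h0
          exact hs (by rw [map_smul, h0, smul_zero])
        · apply ((ha r).2).subset
          intro s hs
          rw [Function.mem_support] at hs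
          rw [Function.mem_support]
          intro h0
          exact hs (by rw [map_smul, h0, smul_zero]) }
  have hvac : G.vac ∈ N := by
    show P G.vac
    intro r
    constructor
    · apply Set.Finite.subset (Set.finite_Ioo (r - 2) (-1 : ℤ))
      intro s hs
      rw [Function.mem_support] at hs
      rw [Set.mem_Ioo]
      by_contra hc
      rw [Decidable.not_and_iff_or_not] at hc
      apply hs
      unfold GhostFock.nobc
      by_cases h2 : s ≤ -2
      · rw [if_pos h2, Module.End.mul_apply, G.c_vac (r - s) (by omega), map_zero]
      · rw [if_neg h2, LinearMap.neg_apply, Module.End.mul_apply,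
          G.b_vac s (by omega), map_zero, neg_zero]
    · apply Set.Finite.subset (Set.finite_Ioo r (1 : ℤ))
      intro s hs
      rw [Function.mem_support] at hs
      rw [Set.mem_Ioo]
      by_contra hc
      rw [Decidable.not_and_iff_or_not] at hc
      apply hs
      unfold GhostFock.noψχ
      by_cases h2 : s ≤ 0
      · rw [if_pos h2, Module.End.mul_apply, G.χ_vac (r - s) (by omega), map_zero]
      · rw [if_neg h2, LinearMap.neg_apply, Module.End.mul_apply,
          G.ψ_vac s (by omega), map_zero, neg_zero]
  have hcl : ∀ (k : ℤ) (x : M), x ∈ N →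
      G.b k x ∈ N ∧ G.c k x ∈ N ∧ G.ψ k x ∈ N ∧ G.χ k x ∈ N := by
    intro k x hx
    have hx' : P x := hx
    refine ⟨?_, ?_, ?_, ?_⟩ <;> show P _ <;> intro r <;> constructor
    · exact fin_shift ((hx' r).1) (r + k) (fun s h0 hne => by
        replace h0 : G.nobc s (r - s) x = 0 := h0
        show G.nobc s (r - s) (G.b k x) = 0
        rw [nobc_mul_b_apply, h0, map_zero, if_neg (by omega), zero_smul, add_zero])
    · exact fin_shift ((hx' r).2) 0 (fun s h0 _ => by
        replace h0 : G.noψχ s (r - s) x = 0 := h0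
        show G.noψχ s (r - s) (G.b k x) = 0
        rw [noψχ_mul_b_apply, h0, map_zero])
    · exact fin_shift ((hx' r).1) (-k) (fun s h0 hne => by
        replace h0 : G.nobc s (r - s) x = 0 := h0
        show G.nobc s (r - s) (G.c k x) = 0
        rw [nobc_mul_c_apply, h0, map_zero, if_neg (by omega), zero_smul, sub_zero])
    · exact fin_shift ((hx' r).2) 0 (fun s h0 _ => by
        replace h0 : G.noψχ s (r - s) x = 0 := h0
        show G.noψχ s (r - s) (G.c k x) = 0
        rw [noψχ_mul_c_apply, h0, map_zero])
    · exact fin_shift ((hx' r).1) 0 (fun s h0 _ => by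
        replace h0 : G.nobc s (r - s) x = 0 := h0
        show G.nobc s (r - s) (G.ψ k x) = 0
        rw [nobc_mul_ψ_apply, h0, map_zero])
    · exact fin_shift ((hx' r).2) (r + k) (fun s h0 hne => by
        replace h0 : G.noψχ s (r - s) x = 0 := h0
        show G.noψχ s (r - s) (G.ψ k x) = 0
        rw [noψχ_mul_ψ_apply, h0, map_zero, if_neg (by omega), zero_smul, add_zero])
    · exact fin_shift ((hx' r).1) 0 (fun s h0 _ => by
        replace h0 : G.nobc s (r - s) x = 0 := h0
        show G.nobc s (r - s) (G.χ k x) = 0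
        rw [nobc_mul_χ_apply, h0, map_zero])
    · exact fin_shift ((hx' r).2) (-k) (fun s h0 hne => by
        replace h0 : G.noψχ s (r - s) x = 0 := h0
        show G.noψχ s (r - s) (G.χ k x) = 0
        rw [noψχ_mul_χ_apply, h0, map_zero, if_neg (by omega), zero_smul, sub_zero])
  have htop := G.generates N hvac hcl
  have hw : w ∈ N := htop ▸ Submodule.mem_top
  exact hw

def Fc (G : GhostFock M) (n : ℤ) (w : M) (s : ℤ) : M :=
  cf n s • G.nobc s (n - s) w + cg s • G.noψχ s (n - s) w

lemma finFc (n : ℤ) (w : M) : (support (Fc G n w)).Finite := by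
  apply ((fin_all G w n).1.union (fin_all G w n).2).subset
  intro s hs
  rw [Function.mem_support] at hs
  rw [Set.mem_union, Function.mem_support, Function.mem_support]
  by_contra hc
  push_neg at hc
  exact hs (by rw [Fc, hc.1, hc.2, smul_zero, smul_zero, add_zero])

lemma fin_comp {f : ℤ → M} (hf : (support f).Finite) (g : Module.End ℂ M) :
    (support fun s => g (f s)).Finite := by
  apply hf.subset
  intro s hs
  rw [Function.mem_support] at hs
  rw [Function.mem_support]
  intro h0
  exact hs (by rw [h0, map_zero])

lemma end_map_finsum (g : Module.End ℂ M) {f : ℤ → M} (hf : (support f).Finite) :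
    g (∑ᶠ s, f s) = ∑ᶠ s, g (f s) := by
  have := g.toAddMonoidHom.map_finsum hf
  simpa using this

end Finiteness

section KLemmas

variable (G : GhostFock M) (LM : ℤ → Module.End ℂ M)

lemma Kb (hLM : ∀ (n : ℤ) (w : M), LM n w = ∑ᶠ s, Fc G n w s) (n k : ℤ) :
    LM n * G.b k = G.b k * LM n + cf n (n + k) • G.b (n + k) := by
  ext w
  simp only [Module.End.mul_apply, LinearMap.add_apply, LinearMap.smul_apply]
  rw [hLM n (G.b k w), hLM n w]
  have hpt : ∀ s, Fc G n (G.b k w) s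
      = G.b k (Fc G n w s) + (cf n s * (if n - s + k = 0 then (1 : ℂ) else 0)) • G.b s w := by
    intro s
    rw [Fc, Fc, nobc_mul_b_apply, noψχ_mul_b_apply, map_add, map_smul, map_smul,
      smul_add, smul_smul]
    module
  have fin1 : (support fun s => G.b k (Fc G n w s)).Finite := fin_comp (finFc G n w) (G.b k)
  have fin2 : (support fun s =>
      (cf n s * (if n - s + k = 0 then (1 : ℂ) else 0)) • G.b s w).Finite := by
    apply (Set.finite_singleton (n + k)).subset
    intro s hs
    rw [Function.mem_support] at hs
    rw [Set.mem_singleton_iff]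
    by_contra hne
    exact hs (by rw [if_neg (by omega), mul_zero, zero_smul])
  have hsingle : (∑ᶠ s, (cf n s * (if n - s + k = 0 then (1 : ℂ) else 0)) • G.b s w)
      = cf n (n + k) • G.b (n + k) w := by
    rw [finsum_eq_single (fun s => (cf n s * (if n - s + k = 0 then (1 : ℂ) else 0)) • G.b s w)
      (n + k) (fun s hs => by rw [if_neg (by omega), mul_zero, zero_smul])]
    rw [if_pos (show n - (n + k) + k = 0 by omega), mul_one]
  rw [finsum_congr hpt, finsum_add_distrib fin1 fin2, hsingle]
  congr 1
  exact (end_map_finsum (G.b k) (finFc G n w)).symm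

lemma Kc (hLM : ∀ (n : ℤ) (w : M), LM n w = ∑ᶠ s, Fc G n w s) (n k : ℤ) :
    LM n * G.c k = G.c k * LM n + (-(cf n (-k))) • G.c (n + k) := by
  ext w
  simp only [Module.End.mul_apply, LinearMap.add_apply, LinearMap.smul_apply]
  rw [hLM n (G.c k w), hLM n w]
  have hpt : ∀ s, Fc G n (G.c k w) s
      = G.c k (Fc G n w s) + ((-(cf n s)) * (if s + k = 0 then (1 : ℂ) else 0)) • G.c (n - s) w := by
    intro s
    rw [Fc, Fc, nobc_mul_c_apply, noψχ_mul_c_apply, map_add, map_smul, map_smul,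
      smul_sub, smul_smul]
    module
  have fin1 : (support fun s => G.c k (Fc G n w s)).Finite := fin_comp (finFc G n w) (G.c k)
  have fin2 : (support fun s =>
      ((-(cf n s)) * (if s + k = 0 then (1 : ℂ) else 0)) • G.c (n - s) w).Finite := by
    apply (Set.finite_singleton (-k)).subset
    intro s hs
    rw [Function.mem_support] at hs
    rw [Set.mem_singleton_iff]
    by_contra hne
    exact hs (by rw [if_neg (by omega), mul_zero, zero_smul])
  have hsingle : (∑ᶠ s, ((-(cf n s)) * (if s + k = 0 then (1 : ℂ) else 0)) • G.c (n - s) w)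
      = (-(cf n (-k))) • G.c (n + k) w := by
    rw [finsum_eq_single (fun s => ((-(cf n s)) * (if s + k = 0 then (1 : ℂ) else 0)) • G.c (n - s) w)
      (-k) (fun s hs => by rw [if_neg (by omega), mul_zero, zero_smul])]
    rw [if_pos (show (-k) + k = 0 by omega), mul_one, show n - -k = n + k from by ring]
  rw [finsum_congr hpt, finsum_add_distrib fin1 fin2, hsingle]
  congr 1
  exact (end_map_finsum (G.c k) (finFc G n w)).symm

lemma Kψ (hLM : ∀ (n : ℤ) (w : M), LM n w = ∑ᶠ s, Fc G n w s) (n k : ℤ) :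
    LM n * G.ψ k = G.ψ k * LM n + cg (n + k) • G.ψ (n + k) := by
  ext w
  simp only [Module.End.mul_apply, LinearMap.add_apply, LinearMap.smul_apply]
  rw [hLM n (G.ψ k w), hLM n w]
  have hpt : ∀ s, Fc G n (G.ψ k w) s
      = G.ψ k (Fc G n w s) + (cg s * (if n - s + k = 0 then (1 : ℂ) else 0)) • G.ψ s w := by
    intro s
    rw [Fc, Fc, noψχ_mul_ψ_apply, nobc_mul_ψ_apply, map_add, map_smul, map_smul,
      smul_add, smul_smul]
    module
  have fin1 : (support fun s => G.ψ k (Fc G n w s)).Finite := fin_comp (finFc G n w) (G.ψ k)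
  have fin2 : (support fun s =>
      (cg s * (if n - s + k = 0 then (1 : ℂ) else 0)) • G.ψ s w).Finite := by
    apply (Set.finite_singleton (n + k)).subset
    intro s hs
    rw [Function.mem_support] at hs
    rw [Set.mem_singleton_iff]
    by_contra hne
    exact hs (by rw [if_neg (by omega), mul_zero, zero_smul])
  have hsingle : (∑ᶠ s, (cg s * (if n - s + k = 0 then (1 : ℂ) else 0)) • G.ψ s w)
      = cg (n + k) • G.ψ (n + k) w := by
    rw [finsum_eq_single (fun s => (cg s * (if n - s + k = 0 then (1 : ℂ) else 0)) • G.ψ s w)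
      (n + k) (fun s hs => by rw [if_neg (by omega), mul_zero, zero_smul])]
    rw [if_pos (show n - (n + k) + k = 0 by omega), mul_one]
  rw [finsum_congr hpt, finsum_add_distrib fin1 fin2, hsingle]
  congr 1
  exact (end_map_finsum (G.ψ k) (finFc G n w)).symm

lemma Kχ (hLM : ∀ (n : ℤ) (w : M), LM n w = ∑ᶠ s, Fc G n w s) (n k : ℤ) :
    LM n * G.χ k = G.χ k * LM n + (-(cg (-k))) • G.χ (n + k) := by
  ext w
  simp only [Module.End.mul_apply, LinearMap.add_apply, LinearMap.smul_apply]
  rw [hLM n (G.χ k w), hLM n w]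
  have hpt : ∀ s, Fc G n (G.χ k w) s
      = G.χ k (Fc G n w s) + ((-(cg s)) * (if s + k = 0 then (1 : ℂ) else 0)) • G.χ (n - s) w := by
    intro s
    rw [Fc, Fc, noψχ_mul_χ_apply, nobc_mul_χ_apply, map_add, map_smul, map_smul,
      smul_sub, smul_smul]
    module
  have fin1 : (support fun s => G.χ k (Fc G n w s)).Finite := fin_comp (finFc G n w) (G.χ k)
  have fin2 : (support fun s =>
      ((-(cg s)) * (if s + k = 0 then (1 : ℂ) else 0)) • G.χ (n - s) w).Finite := by
    apply (Set.finite_singleton (-k)).subset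
    intro s hs
    rw [Function.mem_support] at hs
    rw [Set.mem_singleton_iff]
    by_contra hne
    exact hs (by rw [if_neg (by omega), mul_zero, zero_smul])
  have hsingle : (∑ᶠ s, ((-(cg s)) * (if s + k = 0 then (1 : ℂ) else 0)) • G.χ (n - s) w)
      = (-(cg (-k))) • G.χ (n + k) w := by
    rw [finsum_eq_single (fun s => ((-(cg s)) * (if s + k = 0 then (1 : ℂ) else 0)) • G.χ (n - s) w)
      (-k) (fun s hs => by rw [if_neg (by omega), mul_zero, zero_smul])]
    rw [if_pos (show (-k) + k = 0 by omega), mul_one, show n - -k = n + k from by ring]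
  rw [finsum_congr hpt, finsum_add_distrib fin1 fin2, hsingle]
  congr 1
  exact (end_map_finsum (G.χ k) (finFc G n w)).symm

lemma Dbc (hLM : ∀ (n : ℤ) (w : M), LM n w = ∑ᶠ s, Fc G n w s) (n m s : ℤ) :
    LM n * G.nobc s (m - s) = G.nobc s (m - s) * LM n
      + cf n (n + s) • G.nobc (n + s) (m - s) + (-(cf n (s - m))) • G.nobc s (n + m - s)
      + (cf n (n + s) * ((if s ≤ -2 ∧ -2 < n + s ∧ n + m = 0 then (1 : ℂ) else 0)
          - (if -2 < s ∧ n + s ≤ -2 ∧ n + m = 0 then (1 : ℂ) else 0))) • 1 := by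
  have key := L_comm_NO G.b G.c (-2) (LM n) n (fun k => cf n (n + k)) (fun k => -(cf n (-k)))
    G.acomm_bc (fun k => Kb G LM hLM n k) (fun k => Kc G LM hLM n k) s (m - s)
  simp only [show -(m - s) = s - m from by ring, show n + (m - s) = n + m - s from by ring,
    show (n + s + (m - s) = 0) = (n + m = 0) from propext (by omega)] at key
  exact key

lemma Dψχ (hLM : ∀ (n : ℤ) (w : M), LM n w = ∑ᶠ s, Fc G n w s) (n m s : ℤ) :
    LM n * G.noψχ s (m - s) = G.noψχ s (m - s) * LM n
      + cg (n + s) • G.noψχ (n + s) (m - s) + (-(cg (s - m))) • G.noψχ s (n + m - s)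
      + (cg (n + s) * ((if s ≤ 0 ∧ 0 < n + s ∧ n + m = 0 then (1 : ℂ) else 0)
          - (if 0 < s ∧ n + s ≤ 0 ∧ n + m = 0 then (1 : ℂ) else 0))) • 1 := by
  have key := L_comm_NO G.ψ G.χ 0 (LM n) n (fun k => cg (n + k)) (fun k => -(cg (-k)))
    G.acomm_ψχ (fun k => Kψ G LM hLM n k) (fun k => Kχ G LM hLM n k) s (m - s)
  simp only [show -(m - s) = s - m from by ring, show n + (m - s) = n + m - s from by ring,
    show (n + s + (m - s) = 0) = (n + m = 0) from propext (by omega)] at key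
  exact key

end KLemmas

section Central

def Φbc (n m s : ℤ) : ℂ :=
  cf m s * (cf n (n + s) * ((if s ≤ -2 ∧ -2 < n + s then (1 : ℂ) else 0)
    - (if -2 < s ∧ n + s ≤ -2 then (1 : ℂ) else 0)))

def Φψχ (n s : ℤ) : ℂ :=
  cg s * (cg (n + s) * ((if s ≤ 0 ∧ 0 < n + s then (1 : ℂ) else 0)
    - (if 0 < s ∧ n + s ≤ 0 then (1 : ℂ) else 0)))

lemma finΦbc (n m : ℤ) : (support (Φbc n m)).Finite := by
  apply (Set.finite_Icc (-(n.natAbs : ℤ) - 2) ((n.natAbs : ℤ) + 2)).subset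
  intro s hs
  rw [Function.mem_support] at hs
  rw [Set.mem_Icc]
  by_contra hc
  rw [Decidable.not_and_iff_or_not] at hc
  exact hs (by rw [Φbc, if_neg (by omega), if_neg (by omega)]; ring)

lemma finΦψχ (n : ℤ) : (support (Φψχ n)).Finite := by
  apply (Set.finite_Icc (-(n.natAbs : ℤ) - 2) ((n.natAbs : ℤ) + 2)).subset
  intro s hs
  rw [Function.mem_support] at hs
  rw [Set.mem_Icc]
  by_contra hc
  rw [Decidable.not_and_iff_or_not] at hc
  exact hs (by rw [Φψχ, if_neg (by omega), if_neg (by omega)]; ring)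

lemma sum_quad (a b c : ℂ) (N : ℕ) :
    ∑ t ∈ Finset.range N, (a * (t : ℂ) ^ 2 + b * (t : ℂ) + c)
      = a * ((N : ℂ) * ((N : ℂ) - 1) * (2 * (N : ℂ) - 1) / 6)
        + b * ((N : ℂ) * ((N : ℂ) - 1) / 2) + c * (N : ℂ) := by
  induction N with
  | zero => simp
  | succ k ih =>
      rw [Finset.sum_range_succ, ih]
      push_cast
      ring

lemma finsum_window (φ : ℤ → ℂ) (a : ℤ) (N : ℕ)
    (h : ∀ s, φ s ≠ 0 → a ≤ s ∧ s < a + N) :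
    ∑ᶠ s, φ s = ∑ t ∈ Finset.range N, φ (a + t) := by
  have hsub : support φ ⊆ ↑((Finset.range N).image (fun t : ℕ => a + (t : ℤ))) := by
    intro s hs
    rw [Function.mem_support] at hs
    obtain ⟨hl, hr⟩ := h s hs
    simp only [Finset.coe_image, Set.mem_image, Finset.mem_coe, Finset.mem_range]
    exact ⟨(s - a).toNat, by omega, by omega⟩
  rw [finsum_eq_sum_of_support_subset φ hsub, Finset.sum_image]
  intro x _ y _ hxy
  have hxy' : a + (x : ℤ) = a + (y : ℤ) := hxy
  omega

lemma central (n m : ℤ) (h : n + m = 0) :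
    (∑ᶠ s, Φbc n m s) + (∑ᶠ s, Φψχ n s) = (-28 : ℂ) / 12 * ((n : ℂ) ^ 3 - (n : ℂ)) := by
  obtain rfl : m = -n := by omega
  rcases lt_trichotomy n 0 with hn | hn | hn
  · -- n < 0
    set N : ℕ := (-n).toNat with hN
    have hNn : (N : ℤ) = -n := by omega
    have hNc : (N : ℂ) = -(n : ℂ) := by exact_mod_cast congrArg (fun z : ℤ => (z : ℂ)) hNn
    have h1 : ∑ᶠ s, Φbc n (-n) s = ∑ t ∈ Finset.range N, Φbc n (-n) (-1 + t) := by
      apply finsum_window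
      intro s hs
      by_contra hc
      exact hs (by rw [Φbc, if_neg (by omega), if_neg (by omega)]; ring)
    have h2 : ∑ᶠ s, Φψχ n s = ∑ t ∈ Finset.range N, Φψχ n (1 + t) := by
      apply finsum_window
      intro s hs
      by_contra hc
      exact hs (by rw [Φψχ, if_neg (by omega), if_neg (by omega)]; ring)
    have e1 : ∀ t ∈ Finset.range N, Φbc n (-n) (-1 + (t : ℤ))
        = (-1 : ℂ) * (t : ℂ) ^ 2 + (-(n : ℂ) - 4) * (t : ℂ) + (2 * (n : ℂ) ^ 2 - 2 * (n : ℂ) - 4) := by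
      intro t ht
      rw [Finset.mem_range] at ht
      rw [Φbc, if_neg (by omega), if_pos (by omega), cf, cf]
      push_cast
      ring
    have e2 : ∀ t ∈ Finset.range N, Φψχ n (1 + (t : ℤ))
        = (-1 : ℂ) * (t : ℂ) ^ 2 + (-(n : ℂ) - 2) * (t : ℂ) + (-(n : ℂ) - 1) := by
      intro t ht
      rw [Finset.mem_range] at ht
      rw [Φψχ, if_neg (by omega), if_pos (by omega), cg, cg]
      push_cast
      ring
    rw [h1, h2, Finset.sum_congr rfl e1, Finset.sum_congr rfl e2, sum_quad, sum_quad, hNc]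
    ring
  · subst hn
    have p1 : ∀ s : ℤ, Φbc 0 (-0) s = 0 := fun s => by
      rw [Φbc, if_neg (by omega), if_neg (by omega)]; ring
    have p2 : ∀ s : ℤ, Φψχ 0 s = 0 := fun s => by
      rw [Φψχ, if_neg (by omega), if_neg (by omega)]; ring
    have z1 : ∑ᶠ s, Φbc 0 (-0) s = 0 := by rw [finsum_congr p1, finsum_zero]
    have z2 : ∑ᶠ s, Φψχ 0 s = 0 := by rw [finsum_congr p2, finsum_zero]
    rw [z1, z2]
    norm_num
  · -- n > 0
    set N : ℕ := n.toNat with hN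
    have hNn : (N : ℤ) = n := by omega
    have hNc : (N : ℂ) = (n : ℂ) := by exact_mod_cast congrArg (fun z : ℤ => (z : ℂ)) hNn
    have h1 : ∑ᶠ s, Φbc n (-n) s = ∑ t ∈ Finset.range N, Φbc n (-n) (-n - 1 + t) := by
      apply finsum_window
      intro s hs
      by_contra hc
      exact hs (by rw [Φbc, if_neg (by omega), if_neg (by omega)]; ring)
    have h2 : ∑ᶠ s, Φψχ n s = ∑ t ∈ Finset.range N, Φψχ n (1 - n + t) := by
      apply finsum_window
      intro s hs
      by_contra hc
      exact hs (by rw [Φψχ, if_neg (by omega), if_neg (by omega)]; ring)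
    have e1 : ∀ t ∈ Finset.range N, Φbc n (-n) (-n - 1 + (t : ℤ))
        = (1 : ℂ) * (t : ℂ) ^ 2 + (4 - (n : ℂ)) * (t : ℂ)
          + (-2 * (n : ℂ) ^ 2 - 2 * (n : ℂ) + 4) := by
      intro t ht
      rw [Finset.mem_range] at ht
      rw [Φbc, if_pos (by omega), if_neg (by omega), cf, cf]
      push_cast
      ring
    have e2 : ∀ t ∈ Finset.range N, Φψχ n (1 - n + (t : ℤ))
        = (1 : ℂ) * (t : ℂ) ^ 2 + (2 - (n : ℂ)) * (t : ℂ) + (1 - (n : ℂ)) := by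
      intro t ht
      rw [Finset.mem_range] at ht
      rw [Φψχ, if_pos (by omega), if_neg (by omega), cg, cg]
      push_cast
      ring
    rw [h1, h2, Finset.sum_congr rfl e1, Finset.sum_congr rfl e2, sum_quad, sum_quad, hNc]
    ring

lemma fin_add {f g : ℤ → M} (hf : (support f).Finite) (hg : (support g).Finite) :
    (support fun s => f s + g s).Finite := by
  apply (hf.union hg).subset
  intro s hs
  rw [Function.mem_support] at hs
  rw [Set.mem_union, Function.mem_support, Function.mem_support]
  by_contra hc
  push_neg at hc
  exact hs (by rw [hc.1, hc.2, add_zero])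

end Central

end VirasoroAux


open VirasoroAux Function in
/-- The modes `L^M_n` of the field
`L^M(z) = 2:∂b(z)c(z): + :b(z)∂c(z): + :∂ψ(z)χ(z):`
(with `b(z) = Σ bₘ z^{−m−2}`, `c(z) = Σ cₘ z^{−m+1}`, `ψ(z) = Σ ψₘ z^{−m}`,
`χ(z) = Σ χₘ z^{−m−1}`, so that
`L^M_n = Σₘ (2(−m−2) + (m−n+1)) :bₘ c_{n−m}: + Σₘ (−m) :ψₘ χ_{n−m}:`)
satisfy the Virasoro relations with central charge `−28`. -/
theorem statement4 (G : GhostFock M)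
    (LM : ℤ → Module.End ℂ M)
    (hLM : ∀ (n : ℤ) (w : M),
      LM n w = ∑ᶠ m : ℤ,
        ((2 * (-(m : ℂ) - 2) + ((m : ℂ) - (n : ℂ) + 1)) • G.nobc m (n - m) +
          (-(m : ℂ)) • G.noψχ m (n - m)) w) :
    ∀ n m : ℤ,
      LM n * LM m - LM m * LM n =
        ((n : ℂ) - (m : ℂ)) • LM (n + m) +
          (if n + m = 0 then (-28 : ℂ) / 12 * ((n : ℂ) ^ 3 - (n : ℂ)) else 0) •
            (1 : Module.End ℂ M) := by
  have hLM' : ∀ (r : ℤ) (w : M), LM r w = ∑ᶠ s, Fc G r w s := by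
    intro r w
    rw [hLM r w]
    exact finsum_congr fun s => by
      simp only [Fc, cf, cg, LinearMap.add_apply, LinearMap.smul_apply]
  intro n m
  ext w
  simp only [LinearMap.sub_apply, Module.End.mul_apply, LinearMap.add_apply,
    LinearMap.smul_apply, Module.End.one_apply]
  -- finiteness of the six families
  have hinj : Function.Injective (fun s : ℤ => n + s) := add_right_injective n
  have fbc1 : (support fun s => (cf m s * cf n (n + s)) • G.nobc (n + s) (m - s) w).Finite := by
    apply (((fin_all G w (n + m)).1.preimage (Set.injOn_of_injective hinj))).subset
    intro s hs
    rw [Function.mem_support] at hs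
    simp only [Set.mem_preimage, Function.mem_support]
    intro h0
    exact hs (by rw [show m - s = n + m - (n + s) from by ring, h0, smul_zero])
  have fbc2 : (support fun s => (cf m s * -cf n (s - m)) • G.nobc s (n + m - s) w).Finite := by
    apply (fin_all G w (n + m)).1.subset
    intro s hs
    rw [Function.mem_support] at hs
    rw [Function.mem_support]
    intro h0
    exact hs (by rw [h0, smul_zero])
  have fbc3 : (support fun s => (cf m s * (cf n (n + s) *
      ((if s ≤ -2 ∧ -2 < n + s ∧ n + m = 0 then (1 : ℂ) else 0)
        - (if -2 < s ∧ n + s ≤ -2 ∧ n + m = 0 then (1 : ℂ) else 0)))) • w).Finite := by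
    apply (Set.finite_Icc (-(n.natAbs : ℤ) - 2) ((n.natAbs : ℤ) + 2)).subset
    intro s hs
    rw [Function.mem_support] at hs
    rw [Set.mem_Icc]
    by_contra hc
    rw [Decidable.not_and_iff_or_not] at hc
    apply hs
    rw [if_neg (by omega), if_neg (by omega)]
    simp
  have fψχ1 : (support fun s => (cg s * cg (n + s)) • G.noψχ (n + s) (m - s) w).Finite := by
    apply (((fin_all G w (n + m)).2.preimage (Set.injOn_of_injective hinj))).subset
    intro s hs
    rw [Function.mem_support] at hs
    simp only [Set.mem_preimage, Function.mem_support]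
    intro h0
    exact hs (by rw [show m - s = n + m - (n + s) from by ring, h0, smul_zero])
  have fψχ2 : (support fun s => (cg s * -cg (s - m)) • G.noψχ s (n + m - s) w).Finite := by
    apply (fin_all G w (n + m)).2.subset
    intro s hs
    rw [Function.mem_support] at hs
    rw [Function.mem_support]
    intro h0
    exact hs (by rw [h0, smul_zero])
  have fψχ3 : (support fun s => (cg s * (cg (n + s) *
      ((if s ≤ 0 ∧ 0 < n + s ∧ n + m = 0 then (1 : ℂ) else 0)
        - (if 0 < s ∧ n + s ≤ 0 ∧ n + m = 0 then (1 : ℂ) else 0)))) • w).Finite := by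
    apply (Set.finite_Icc (-(n.natAbs : ℤ) - 2) ((n.natAbs : ℤ) + 2)).subset
    intro s hs
    rw [Function.mem_support] at hs
    rw [Set.mem_Icc]
    by_contra hc
    rw [Decidable.not_and_iff_or_not] at hc
    apply hs
    rw [if_neg (by omega), if_neg (by omega)]
    simp
  -- pointwise commutator
  have hD : ∀ s : ℤ, LM n (Fc G m w s) - Fc G m (LM n w) s
      = (cf m s * cf n (n + s)) • G.nobc (n + s) (m - s) w
        + (cf m s * -cf n (s - m)) • G.nobc s (n + m - s) w
        + (cf m s * (cf n (n + s) *
            ((if s ≤ -2 ∧ -2 < n + s ∧ n + m = 0 then (1 : ℂ) else 0)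
              - (if -2 < s ∧ n + s ≤ -2 ∧ n + m = 0 then (1 : ℂ) else 0)))) • w
        + ((cg s * cg (n + s)) • G.noψχ (n + s) (m - s) w
          + (cg s * -cg (s - m)) • G.noψχ s (n + m - s) w
          + (cg s * (cg (n + s) *
              ((if s ≤ 0 ∧ 0 < n + s ∧ n + m = 0 then (1 : ℂ) else 0)
                - (if 0 < s ∧ n + s ≤ 0 ∧ n + m = 0 then (1 : ℂ) else 0)))) • w) := by
    intro s
    have h1 := congrArg (fun T : Module.End ℂ M => T w) (Dbc G LM hLM' n m s)
    have h2 := congrArg (fun T : Module.End ℂ M => T w) (Dψχ G LM hLM' n m s)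
    simp only [Module.End.mul_apply, LinearMap.add_apply, LinearMap.smul_apply,
      Module.End.one_apply] at h1 h2
    rw [Fc, Fc, map_add, map_smul, map_smul, h1, h2]
    module
  have key : LM n (LM m w) - LM m (LM n w)
      = ∑ᶠ s, (LM n (Fc G m w s) - Fc G m (LM n w) s) := by
    rw [hLM' m w, hLM' m (LM n w), end_map_finsum (LM n) (finFc G m w),
      ← finsum_sub_distrib (fin_comp (finFc G m w) (LM n)) (finFc G m (LM n w))]
  rw [key, finsum_congr hD,
    finsum_add_distrib (fin_add (fin_add fbc1 fbc2) fbc3)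
      (fin_add (fin_add fψχ1 fψχ2) fψχ3),
    finsum_add_distrib (fin_add fbc1 fbc2) fbc3,
    finsum_add_distrib fbc1 fbc2,
    finsum_add_distrib (fin_add fψχ1 fψχ2) fψχ3,
    finsum_add_distrib fψχ1 fψχ2]
  -- reindexing the shifted sums
  have hA : (∑ᶠ s, (cf m s * cf n (n + s)) • G.nobc (n + s) (m - s) w)
      = ∑ᶠ t, (cf m (t - n) * cf n t) • G.nobc t (n + m - t) w := by
    rw [← finsum_comp_equiv (Equiv.addLeft n)
      (f := fun t => (cf m (t - n) * cf n t) • G.nobc t (n + m - t) w)]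
    apply finsum_congr
    intro s
    simp only [Equiv.coe_addLeft]
    rw [show n + s - n = s from by ring, show n + m - (n + s) = m - s from by ring]
  have hP : (∑ᶠ s, (cg s * cg (n + s)) • G.noψχ (n + s) (m - s) w)
      = ∑ᶠ t, (cg (t - n) * cg t) • G.noψχ t (n + m - t) w := by
    rw [← finsum_comp_equiv (Equiv.addLeft n)
      (f := fun t => (cg (t - n) * cg t) • G.noψχ t (n + m - t) w)]
    apply finsum_congr
    intro s
    simp only [Equiv.coe_addLeft]
    rw [show n + s - n = s from by ring, show n + m - (n + s) = m - s from by ring]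
  have fbc1' : (support fun t => (cf m (t - n) * cf n t) • G.nobc t (n + m - t) w).Finite := by
    apply (fin_all G w (n + m)).1.subset
    intro s hs
    rw [Function.mem_support] at hs
    rw [Function.mem_support]
    intro h0
    exact hs (by rw [h0, smul_zero])
  have fψχ1' : (support fun t => (cg (t - n) * cg t) • G.noψχ t (n + m - t) w).Finite := by
    apply (fin_all G w (n + m)).2.subset
    intro s hs
    rw [Function.mem_support] at hs
    rw [Function.mem_support]
    intro h0
    exact hs (by rw [h0, smul_zero])
  -- combining pairs of sums
  have hbc : (∑ᶠ t, (cf m (t - n) * cf n t) • G.nobc t (n + m - t) w)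
      + (∑ᶠ s, (cf m s * -cf n (s - m)) • G.nobc s (n + m - s) w)
      = ∑ᶠ t, (((n : ℂ) - (m : ℂ)) * cf (n + m) t) • G.nobc t (n + m - t) w := by
    rw [← finsum_add_distrib fbc1' fbc2]
    apply finsum_congr
    intro t
    rw [← add_smul]
    congr 1
    simp only [cf]
    push_cast
    ring
  have hψχ : (∑ᶠ t, (cg (t - n) * cg t) • G.noψχ t (n + m - t) w)
      + (∑ᶠ s, (cg s * -cg (s - m)) • G.noψχ s (n + m - s) w)
      = ∑ᶠ t, (((n : ℂ) - (m : ℂ)) * cg t) • G.noψχ t (n + m - t) w := by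
    rw [← finsum_add_distrib fψχ1' fψχ2]
    apply finsum_congr
    intro t
    rw [← add_smul]
    congr 1
    simp only [cg]
    push_cast
    ring
  -- the right-hand side
  have hg1 : (support fun t => (((n : ℂ) - (m : ℂ)) * cf (n + m) t) • G.nobc t (n + m - t) w).Finite := by
    apply (fin_all G w (n + m)).1.subset
    intro s hs
    rw [Function.mem_support] at hs
    rw [Function.mem_support]
    intro h0
    exact hs (by rw [h0, smul_zero])
  have hg2 : (support fun t => (((n : ℂ) - (m : ℂ)) * cg t) • G.noψχ t (n + m - t) w).Finite := by
    apply (fin_all G w (n + m)).2.subset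
    intro s hs
    rw [Function.mem_support] at hs
    rw [Function.mem_support]
    intro h0
    exact hs (by rw [h0, smul_zero])
  have hR : ((n : ℂ) - (m : ℂ)) • LM (n + m) w
      = (∑ᶠ t, (((n : ℂ) - (m : ℂ)) * cf (n + m) t) • G.nobc t (n + m - t) w)
        + ∑ᶠ t, (((n : ℂ) - (m : ℂ)) * cg t) • G.noψχ t (n + m - t) w := by
    rw [hLM' (n + m) w, smul_finsum' ((n : ℂ) - (m : ℂ)) (finFc G (n + m) w),
      finsum_congr (fun t => by
        rw [Fc, smul_add, smul_smul, smul_smul] :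
        ∀ t : ℤ, ((n : ℂ) - (m : ℂ)) • Fc G (n + m) w t
          = (((n : ℂ) - (m : ℂ)) * cf (n + m) t) • G.nobc t (n + m - t) w
            + (((n : ℂ) - (m : ℂ)) * cg t) • G.noψχ t (n + m - t) w),
      finsum_add_distrib hg1 hg2]
  -- the central term
  have hcen : (∑ᶠ s, (cf m s * (cf n (n + s) *
        ((if s ≤ -2 ∧ -2 < n + s ∧ n + m = 0 then (1 : ℂ) else 0)
          - (if -2 < s ∧ n + s ≤ -2 ∧ n + m = 0 then (1 : ℂ) else 0)))) • w)
      + (∑ᶠ s, (cg s * (cg (n + s) *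
          ((if s ≤ 0 ∧ 0 < n + s ∧ n + m = 0 then (1 : ℂ) else 0)
            - (if 0 < s ∧ n + s ≤ 0 ∧ n + m = 0 then (1 : ℂ) else 0)))) • w)
      = (if n + m = 0 then (-28 : ℂ) / 12 * ((n : ℂ) ^ 3 - (n : ℂ)) else 0) • w := by
    by_cases h0 : n + m = 0
    · have eb : ∀ s : ℤ, (cf m s * (cf n (n + s) *
          ((if s ≤ -2 ∧ -2 < n + s ∧ n + m = 0 then (1 : ℂ) else 0)
            - (if -2 < s ∧ n + s ≤ -2 ∧ n + m = 0 then (1 : ℂ) else 0)))) • w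
          = Φbc n m s • w := fun s => by
        rw [Φbc]
        simp [h0]
      have ep : ∀ s : ℤ, (cg s * (cg (n + s) *
          ((if s ≤ 0 ∧ 0 < n + s ∧ n + m = 0 then (1 : ℂ) else 0)
            - (if 0 < s ∧ n + s ≤ 0 ∧ n + m = 0 then (1 : ℂ) else 0)))) • w
          = Φψχ n s • w := fun s => by
        rw [Φψχ]
        simp [h0]
      rw [finsum_congr eb, finsum_congr ep, ← finsum_smul' (finΦbc n m) w,
        ← finsum_smul' (finΦψχ n) w, ← add_smul, central n m h0, if_pos h0]
    · have eb : ∀ s : ℤ, (cf m s * (cf n (n + s) *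
          ((if s ≤ -2 ∧ -2 < n + s ∧ n + m = 0 then (1 : ℂ) else 0)
            - (if -2 < s ∧ n + s ≤ -2 ∧ n + m = 0 then (1 : ℂ) else 0)))) • w
          = (0 : M) := fun s => by
        rw [if_neg (fun hc => h0 hc.2.2), if_neg (fun hc => h0 hc.2.2)]
        simp
      have ep : ∀ s : ℤ, (cg s * (cg (n + s) *
          ((if s ≤ 0 ∧ 0 < n + s ∧ n + m = 0 then (1 : ℂ) else 0)
            - (if 0 < s ∧ n + s ≤ 0 ∧ n + m = 0 then (1 : ℂ) else 0)))) • w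
          = (0 : M) := fun s => by
        rw [if_neg (fun hc => h0 hc.2.2), if_neg (fun hc => h0 hc.2.2)]
        simp
      rw [finsum_congr eb, finsum_congr ep, finsum_zero, add_zero, if_neg h0, zero_smul]
  rw [hA, hP, hR, ← hbc, ← hψχ, ← hcen]
  abel

end
end
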